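/- Let E and F be reproducing kernel Hilbert spaces of functions on the same set M with kernels K_E and K_F. Then the function K(x,y) = K_E(x,y)·K_F(x,y) is the reproducing kernel of the space G of restrictions to the diagonal of elements of E ⊗ F, where the norm of g ∈ G is the minimum of the norms of elements of E ⊗ F restricting to g. -/

import Mathlib

open scoped ComplexConjugate ComplexInnerProductSpace

/-- Aronszajn: if `E`, `F` are RKHS of functions on the same set `M` with
kernels `K_E`, `K_F`, then `K(x,y) = K_E(x,y) K_F(x,y)` is the reproducing kernel of the
space `G` of restrictions to the diagonal of elements of `E ⊗ F` (realized here as a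
Hilbert space `T` of functions on `M × M` with kernel `K_E(x₁,y₁)K_F(x₂,y₂)`), where the
norm of `g ∈ G` is the infimum (minimum) of the norms of elements of `T` restricting to
`g` on the diagonal. -/
theorem diagonal_product_reproducing_kernel
    {M T G : Type*}
    [NormedAddCommGroup T] [InnerProductSpace ℂ T] [CompleteSpace T]
    [NormedAddCommGroup G] [InnerProductSpace ℂ G] [CompleteSpace G]
    (KE KF : M → M → ℂ)
    (toT : T →ₗ[ℂ] (M × M → ℂ)) (KTfun : M × M → T)
    (hKT : ∀ p q : M × M, toT (KTfun q) p = KE p.1 q.1 * KF p.2 q.2)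
    (hreprT : ∀ (h : T) (q : M × M), toT h q = ⟪KTfun q, h⟫)
    (toG : G →ₗ[ℂ] (M → ℂ)) (hinj : Function.Injective toG)
    (hrange : Set.range toG = Set.range fun h : T => fun x : M => toT h (x, x))
    (hnorm : ∀ g : G,
      ‖g‖ = sInf {r : ℝ | ∃ h : T, (∀ x : M, toT h (x, x) = toG g x) ∧ ‖h‖ = r}) :
    ∃ KGfun : M → G,
      (∀ x y : M, toG (KGfun y) x = KE x y * KF x y) ∧
      (∀ (g : G) (y : M), toG g y = ⟪KGfun y, g⟫) := by
  classical
  -- the diagonal-restriction map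
  set Δ : T →ₗ[ℂ] (M → ℂ) := (LinearMap.funLeft ℂ ℂ (fun x : M => (x, x))).comp toT
    with hΔdef
  have hΔapp : ∀ (h : T) (x : M), Δ h x = toT h (x, x) := fun h x => rfl
  have hmem : ∀ h : T, Δ h ∈ Set.range toG := by
    intro h
    rw [hrange]
    exact ⟨h, rfl⟩
  -- the induced map S : T → G
  set S0 : T → G := fun h => Function.invFun toG (Δ h) with hS0def
  have hS0G : ∀ h : T, toG (S0 h) = Δ h := fun h => Function.invFun_eq (hmem h)
  have Smap_add : ∀ a b : T, S0 (a + b) = S0 a + S0 b := by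
    intro a b
    apply hinj
    rw [map_add, hS0G, hS0G, hS0G, map_add]
  have Smap_smul : ∀ (c : ℂ) (a : T), S0 (c • a) = c • S0 a := by
    intro c a
    apply hinj
    rw [map_smul, hS0G, hS0G, map_smul]
  set S : T →ₗ[ℂ] G :=
    { toFun := S0, map_add' := Smap_add, map_smul' := fun c a => Smap_smul c a } with hSdef
  have hSG : ∀ h : T, toG (S h) = Δ h := hS0G
  -- surjectivity of S
  have hsurj : ∀ g : G, ∃ h : T, S h = g := by
    intro g
    have hg : toG g ∈ Set.range fun h : T => fun x : M => toT h (x, x) := by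
      rw [← hrange]; exact ⟨g, rfl⟩
    obtain ⟨h, hh⟩ := hg
    exact ⟨h, hinj ((hSG h).trans hh)⟩
  -- S is norm-decreasing
  have hbdd : ∀ g : G, BddBelow {r : ℝ | ∃ h : T, (∀ x : M, toT h (x, x) = toG g x) ∧ ‖h‖ = r} := by
    intro g
    exact ⟨0, fun r hr => by obtain ⟨h', _, hn⟩ := hr; rw [← hn]; exact norm_nonneg _⟩
  have hmemset : ∀ h : T,
      ‖h‖ ∈ {r : ℝ | ∃ h' : T, (∀ x : M, toT h' (x, x) = toG (S h) x) ∧ ‖h'‖ = r} := by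
    intro h
    exact ⟨h, fun x => by rw [hSG h]; exact (hΔapp h x).symm, rfl⟩
  have hSle : ∀ h : T, ‖S h‖ ≤ ‖h‖ := by
    intro h
    rw [hnorm (S h)]
    exact csInf_le (hbdd (S h)) (hmemset h)
  -- continuity, kernel
  set Sc : T →L[ℂ] G := S.mkContinuous 1 (fun h => by simpa using hSle h) with hScdef
  have hScS : ∀ h : T, Sc h = S h := fun h => rfl
  set N : Submodule ℂ T := LinearMap.ker (Sc : T →ₗ[ℂ] G) with hNdef
  haveI : CompleteSpace N := Sc.isClosed_ker.completeSpace_coe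
  -- S preserves norms on Nᗮ
  have hnormpres : ∀ h₀ : T, h₀ ∈ Nᗮ → ‖S h₀‖ = ‖h₀‖ := by
    intro h₀ h₀mem
    refine le_antisymm (hSle h₀) ?_
    rw [hnorm (S h₀)]
    refine le_csInf ⟨‖h₀‖, hmemset h₀⟩ ?_
    rintro r ⟨h, hhx, rfl⟩
    have hΔeq : Δ h = toG (S h₀) := funext fun x => hhx x
    have hSeq : S h = S h₀ := hinj ((hSG h).trans hΔeq)
    have hker : h - h₀ ∈ N := by
      rw [hNdef, LinearMap.mem_ker, ContinuousLinearMap.coe_coe, hScS, map_sub, hSeq, sub_self]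
    have hinner : ⟪h - h₀, h₀⟫ = 0 := h₀mem (h - h₀) hker
    have hsq : ‖h‖ ^ 2 = ‖h - h₀‖ ^ 2 + ‖h₀‖ ^ 2 := by
      have := norm_add_sq (𝕜 := ℂ) (h - h₀) h₀
      rw [hinner] at this
      simpa using this
    have h1 : ‖h₀‖ ^ 2 ≤ ‖h‖ ^ 2 := by
      rw [hsq]
      have := sq_nonneg ‖h - h₀‖
      linarith
    exact (pow_le_pow_iff_left₀ (norm_nonneg h₀) (norm_nonneg h) two_ne_zero).mp h1
  -- S restricted to Nᗮ is a linear isometry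
  set Si : Nᗮ →ₗᵢ[ℂ] G :=
    { toLinearMap := S.comp (Submodule.subtype Nᗮ),
      norm_map' := fun a => hnormpres a a.2 } with hSidef
  refine ⟨fun y => S (KTfun (y, y)), ?_, ?_⟩
  · intro x y
    rw [hSG]
    exact hKT (x, x) (y, y)
  · intro g y
    obtain ⟨h, hh⟩ := hsurj g
    set h₀ : T := h - (N.orthogonalProjection h : T) with hh₀def
    have hh₀N : h₀ ∈ Nᗮ := N.sub_starProjection_mem_orthogonal h
    have hSproj : ∀ t : T, S ((N.orthogonalProjection t : T)) = 0 := by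
      intro t
      have ht := LinearMap.mem_ker.mp (N.orthogonalProjection t).2
      rw [ContinuousLinearMap.coe_coe, hScS] at ht
      exact ht
    have hSh₀ : S h₀ = g := by
      rw [hh₀def, map_sub, hSproj, sub_zero, hh]
    set k : T := KTfun (y, y) with hkdef
    set k₀ : T := k - (N.orthogonalProjection k : T) with hk₀def
    have hk₀N : k₀ ∈ Nᗮ := N.sub_starProjection_mem_orthogonal k
    have hSk : S k₀ = S k := by
      rw [hk₀def, map_sub, hSproj, sub_zero]
    have step1 : toG g y = toT h₀ (y, y) := by
      rw [← hSh₀, hSG]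
      exact hΔapp h₀ y
    have step2 : toT h₀ (y, y) = ⟪k, h₀⟫ := hreprT h₀ (y, y)
    have step3 : ⟪k, h₀⟫ = ⟪k₀, h₀⟫ := by
      rw [hk₀def, inner_sub_left, hh₀N _ (N.orthogonalProjection k).2, sub_zero]
    have step4 : ⟪k₀, h₀⟫ = ⟪S k, g⟫ := by
      have := Si.inner_map_map ⟨k₀, hk₀N⟩ ⟨h₀, hh₀N⟩
      have hik : Si ⟨k₀, hk₀N⟩ = S k₀ := rfl
      have hih : Si ⟨h₀, hh₀N⟩ = S h₀ := rfl
      rw [hik, hih, hSk, hSh₀] at this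
      exact this.symm
    rw [step1, step2, step3, step4]
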